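/- arXiv:1411.3810 — 2 statements merged into one kernel-verified Lean document; each statement's English description precedes it below -/
import Mathlib

section
/- For all integers m, n ≥ 2, the rank-two null space of the lifted linear convolution map with one dimension equal to 2 is exactly the parametrized set N0: N(S_{(m,2)}, 2) = N0(m,2) and N(S_{(2,n)}, 2) = N0(2,n). -/
open scoped BigOperators
open MeasureTheory

noncomputable section

/-- 1-based access into a vector `u ∈ ℝ^d`, with the convention that
out-of-range indices (including `0` and anything `> d`) give `0`. -/
def pad1 {d : ℕ} (u : Fin d → ℝ) (i : ℕ) : ℝ :=
  if h : 1 ≤ i ∧ i ≤ d then u ⟨i - 1, by omega⟩ else 0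

/-- The lifted linear convolution map `S_{(m,n)} : ℝ^{m×n} → ℝ^{m+n-1}`,
summing the entries of a matrix along its anti-diagonals. -/
def liftS (m n : ℕ) (W : Matrix (Fin m) (Fin n) ℝ) : Fin (m + n - 1) → ℝ :=
  fun l => ∑ k : Fin m, ∑ j : Fin n, if (k : ℕ) + (j : ℕ) = (l : ℕ) then W k j else 0

/-- Linear convolution `x ⋆ y ∈ ℝ^{m+n-1}` of `x ∈ ℝ^m` and `y ∈ ℝ^n`. -/
def conv {m n : ℕ} (x : Fin m → ℝ) (y : Fin n → ℝ) : Fin (m + n - 1) → ℝ :=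
  fun l => ∑ k : Fin m, ∑ j : Fin n, if (k : ℕ) + (j : ℕ) = (l : ℕ) then x k * y j else 0

/-- The rank-two null space `N(S_{(m,n)}, 2)`. -/
def rankTwoNull (m n : ℕ) : Set (Matrix (Fin m) (Fin n) ℝ) :=
  {Q | Q.rank ≤ 2 ∧ liftS m n Q = 0}

/-- The parametrized family `N0(m,n)`:
`Q(k,l) = u(k)·v(l−1) − u(k−1)·v(l)` (1-based, with zero-padding conventions). -/
def N0set (m n : ℕ) : Set (Matrix (Fin m) (Fin n) ℝ) :=
  {Q | ∃ (u : Fin (m - 1) → ℝ) (v : Fin (n - 1) → ℝ),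
    ∀ (k : Fin m) (l : Fin n),
      Q k l = pad1 u ((k : ℕ) + 1) * pad1 v (l : ℕ) - pad1 u (k : ℕ) * pad1 v ((l : ℕ) + 1)}

/-- The recursively defined family `N2(m,n)`:
`Q(k,l) = u₁(k)·v₁(l−1) + u₂(k−1)·v₂(l)` (1-based, with zero-padding conventions),
where `u₁v₁ᵀ + u₂v₂ᵀ ∈ N(S_{(m-1,n-1)}, 2) \ {0}`. -/
def N2set (m n : ℕ) : Set (Matrix (Fin m) (Fin n) ℝ) :=
  {Q | ∃ (u₁ u₂ : Fin (m - 1) → ℝ) (v₁ v₂ : Fin (n - 1) → ℝ),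
    (Matrix.of fun i j => u₁ i * v₁ j + u₂ i * v₂ j) ∈ rankTwoNull (m - 1) (n - 1) ∧
    (Matrix.of fun i j => u₁ i * v₁ j + u₂ i * v₂ j) ≠ (0 : Matrix (Fin (m - 1)) (Fin (n - 1)) ℝ) ∧
    ∀ (k : Fin m) (l : Fin n),
      Q k l = pad1 u₁ ((k : ℕ) + 1) * pad1 v₁ (l : ℕ) + pad1 u₂ (k : ℕ) * pad1 v₂ ((l : ℕ) + 1)}

/-- The exceptional set `M(m,n) = {Q ∈ N(S_{(m,n)}, 2) : Q(m,1) = 0 and Q(1,n) = 0}` (1-based). -/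
def Mexc (m n : ℕ) (hm : 0 < m) (hn : 0 < n) : Set (Matrix (Fin m) (Fin n) ℝ) :=
  {Q | Q ∈ rankTwoNull m n ∧ Q ⟨m - 1, by omega⟩ ⟨0, hn⟩ = 0 ∧ Q ⟨0, hm⟩ ⟨n - 1, by omega⟩ = 0}

/-- Identifiability of the pair `p = (x,y)` with respect to linear convolution
and the constraint set `K`. -/
def Identifiable {m n : ℕ} (K : Set ((Fin m → ℝ) × (Fin n → ℝ)))
    (p : (Fin m → ℝ) × (Fin n → ℝ)) : Prop :=
  ∀ q ∈ K, conv q.1 q.2 = conv p.1 p.2 →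
    ∃ α : ℝ, α ≠ 0 ∧ q.1 = α • p.1 ∧ q.2 = (1 / α) • p.2

/-- The quotient set `Q∼(w,d)`: pairs `(w*, γ) ∈ ℝ^{d-1} × [0, 2π)` with
`w(j) = w*(j)·cos γ − w*(j−1)·sin γ` for `1 ≤ j ≤ d` (1-based, zero-padding conventions). -/
def quotSet (d : ℕ) (w : Fin d → ℝ) : Set ((Fin (d - 1) → ℝ) × ℝ) :=
  {p | p.2 ∈ Set.Ico 0 (2 * Real.pi) ∧
    ∀ j : Fin d, w j = pad1 p.1 ((j : ℕ) + 1) * Real.cos p.2 - pad1 p.1 (j : ℕ) * Real.sin p.2}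

/-- Matrices over `ℝ` carry the (product) metric space structure of `ℝ^{m×n}`. -/
instance {m n : ℕ} : MetricSpace (Matrix (Fin m) (Fin n) ℝ) :=
  show MetricSpace (Fin m → Fin n → ℝ) from inferInstance

lemma sumA {m : ℕ} (c : ℕ) (f : Fin m → ℝ) :
    (∑ k : Fin m, if (k : ℕ) = c then f k else 0)
      = if h : c < m then f ⟨c, h⟩ else 0 := by
  split
  · next h =>
    rw [Finset.sum_eq_single_of_mem ⟨c, h⟩ (Finset.mem_univ _)]
    · exact if_pos rfl
    · intro k _ hk
      rw [if_neg]
      exact fun hc => hk (Fin.ext hc)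
  · next h =>
    apply Finset.sum_eq_zero
    intro k _
    have := k.isLt
    rw [if_neg]
    omega

lemma sumB {m : ℕ} (c : ℕ) (f : Fin m → ℝ) :
    (∑ k : Fin m, if (k : ℕ) + 1 = c then f k else 0)
      = if h : 1 ≤ c ∧ c - 1 < m then f ⟨c - 1, h.2⟩ else 0 := by
  split
  · next h =>
    rw [Finset.sum_eq_single_of_mem ⟨c - 1, h.2⟩ (Finset.mem_univ _)]
    · show (if c - 1 + 1 = c then f ⟨c - 1, h.2⟩ else 0) = f ⟨c - 1, h.2⟩
      rw [if_pos (show c - 1 + 1 = c by omega)]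
    · intro k _ hk
      rw [if_neg]
      intro hc
      apply hk
      apply Fin.ext
      show (k : ℕ) = c - 1
      omega
  · next h =>
    apply Finset.sum_eq_zero
    intro k _
    have := k.isLt
    rw [if_neg]
    omega

lemma liftS_m2 (m : ℕ) (Q : Matrix (Fin m) (Fin 2) ℝ) (l : Fin (m + 2 - 1)) :
    liftS m 2 Q l
      = (if h : (l : ℕ) < m then Q ⟨l, h⟩ 0 else 0)
        + (if h : 1 ≤ (l : ℕ) ∧ (l : ℕ) - 1 < m then Q ⟨(l : ℕ) - 1, h.2⟩ 1 else 0) := by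
  unfold liftS
  have h1 : ∀ k : Fin m,
      (∑ j : Fin 2, if (k : ℕ) + (j : ℕ) = (l : ℕ) then Q k j else 0)
        = (if (k : ℕ) = (l : ℕ) then Q k 0 else 0)
          + (if (k : ℕ) + 1 = (l : ℕ) then Q k 1 else 0) := by
    intro k
    rw [Fin.sum_univ_two]
    simp
  simp_rw [h1]
  rw [Finset.sum_add_distrib, sumA, sumB]

lemma liftS_2n (n : ℕ) (Q : Matrix (Fin 2) (Fin n) ℝ) (l : Fin (2 + n - 1)) :
    liftS 2 n Q l
      = (if h : (l : ℕ) < n then Q 0 ⟨l, h⟩ else 0)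
        + (if h : 1 ≤ (l : ℕ) ∧ (l : ℕ) - 1 < n then Q 1 ⟨(l : ℕ) - 1, h.2⟩ else 0) := by
  unfold liftS
  rw [Fin.sum_univ_two]
  have h0 : (∑ j : Fin n, if ((0 : Fin 2) : ℕ) + (j : ℕ) = (l : ℕ) then Q 0 j else 0)
      = ∑ j : Fin n, if (j : ℕ) = (l : ℕ) then Q 0 j else 0 := by simp
  have h1 : (∑ j : Fin n, if ((1 : Fin 2) : ℕ) + (j : ℕ) = (l : ℕ) then Q 1 j else 0)
      = ∑ j : Fin n, if (j : ℕ) + 1 = (l : ℕ) then Q 1 j else 0 := by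
    apply Finset.sum_congr rfl
    intro j _
    rw [Fin.val_one, Nat.add_comm 1 (j : ℕ)]
  rw [h0, h1, sumA, sumB]

lemma pad1_pos {d i : ℕ} (u : Fin d → ℝ) (h : 1 ≤ i ∧ i ≤ d) :
    pad1 u i = u ⟨i - 1, by omega⟩ := dif_pos h

lemma pad1_zero {d i : ℕ} (u : Fin d → ℝ) (h : ¬(1 ≤ i ∧ i ≤ d)) :
    pad1 u i = 0 := dif_neg h

/-- for `m, n ≥ 2`, `N(S_{(m,2)}, 2) = N0(m,2)` and `N(S_{(2,n)}, 2) = N0(2,n)`. -/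
theorem stmt3 (m n : ℕ) (hm : 2 ≤ m) (hn : 2 ≤ n) :
    rankTwoNull m 2 = N0set m 2 ∧ rankTwoNull 2 n = N0set 2 n := by
  constructor
  · -- N(S_{(m,2)}, 2) = N0(m,2)
    ext Q
    constructor
    · rintro ⟨-, hS⟩
      have key : ∀ c : ℕ, c ≤ m →
          (if h : c < m then Q ⟨c, h⟩ 0 else 0)
            + (if h : 1 ≤ c ∧ c - 1 < m then Q ⟨c - 1, h.2⟩ 1 else 0) = 0 := by
        intro c hc
        have h := congrFun hS ⟨c, by omega⟩
        rw [liftS_m2] at h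
        simpa using h
      have e0 : Q ⟨0, by omega⟩ 0 = 0 := by
        have h := key 0 (by omega)
        rw [dif_pos (show (0:ℕ) < m by omega), dif_neg (show ¬(1 ≤ 0 ∧ 0 - 1 < m) by omega)] at h
        simpa using h
      have elast : Q ⟨m - 1, by omega⟩ 1 = 0 := by
        have h := key m (by omega)
        rw [dif_neg (show ¬(m < m) by omega), dif_pos (show 1 ≤ m ∧ m - 1 < m by omega)] at h
        simpa using h
      have emid : ∀ (c : ℕ) (_ : 1 ≤ c) (_ : c ≤ m - 1),
          Q ⟨c, by omega⟩ 0 + Q ⟨c - 1, by omega⟩ 1 = 0 := by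
        intro c h1 h2
        have h := key c (by omega)
        rw [dif_pos (show c < m by omega), dif_pos (show 1 ≤ c ∧ c - 1 < m by omega)] at h
        exact h
      set u : Fin (m - 1) → ℝ := fun j => -Q ⟨(j : ℕ) + 1, by omega⟩ 0 with hudef
      set v : Fin (2 - 1) → ℝ := fun _ => (1 : ℝ) with hvdef
      refine ⟨u, v, ?_⟩
      have hu1 : ∀ (i : ℕ) (_ : 1 ≤ i) (_ : i ≤ m - 1),
          pad1 u i = -Q ⟨i, by omega⟩ 0 := by
        intro i h1 h2
        rw [pad1_pos u ⟨h1, h2⟩]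
        show -Q ⟨i - 1 + 1, by omega⟩ 0 = -Q ⟨i, by omega⟩ 0
        exact congrArg (fun t : Fin m => -Q t 0) (Fin.ext (show i - 1 + 1 = i by omega))
      have hv1 : pad1 v (1 : ℕ) = 1 := pad1_pos v (by omega)
      intro k l
      have hl2 := l.isLt
      rcases (show (l : ℕ) = 0 ∨ (l : ℕ) = 1 by omega) with h | h
      · rw [h]
        rw [pad1_zero v (show ¬(1 ≤ 0 ∧ 0 ≤ 2 - 1) by omega),
            show (0:ℕ) + 1 = 1 from rfl, hv1]
        have hl0 : l = 0 := Fin.ext (by rw [h]; rfl)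
        rw [hl0]
        by_cases hk1 : 1 ≤ (k : ℕ) ∧ (k : ℕ) ≤ m - 1
        · rw [hu1 _ hk1.1 hk1.2,
              show (⟨(k : ℕ), by omega⟩ : Fin m) = k from Fin.ext rfl]
          ring
        · rw [pad1_zero u hk1]
          have hk0 : (k : ℕ) = 0 := by have := k.isLt; omega
          rw [show k = ⟨0, by omega⟩ from Fin.ext hk0, e0]
          ring
      · rw [h]
        rw [hv1, pad1_zero v (show ¬(1 ≤ 1 + 1 ∧ 1 + 1 ≤ 2 - 1) by omega)]
        have hl1 : l = 1 := Fin.ext (by rw [h]; rfl)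
        rw [hl1]
        by_cases hk1 : (k : ℕ) + 1 ≤ m - 1
        · rw [hu1 ((k : ℕ) + 1) (by omega) hk1]
          have h2 := emid ((k : ℕ) + 1) (by omega) hk1
          rw [show (⟨(k : ℕ) + 1 - 1, by omega⟩ : Fin m) = k
              from Fin.ext (show (k : ℕ) + 1 - 1 = (k : ℕ) by omega)] at h2
          linarith
        · rw [pad1_zero u (show ¬(1 ≤ (k : ℕ) + 1 ∧ (k : ℕ) + 1 ≤ m - 1) by omega)]
          have hkm : (k : ℕ) = m - 1 := by have := k.isLt; omega
          rw [show k = ⟨m - 1, by omega⟩ from Fin.ext hkm, elast]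
          ring
    · rintro ⟨u, v, huv⟩
      constructor
      · exact (Matrix.rank_le_card_width Q).trans (by simp)
      · have hc0 : ∀ k : Fin m, Q k 0 = -(pad1 u (k : ℕ) * pad1 v 1) := by
          intro k
          rw [huv k 0]
          simp only [Fin.val_zero]
          rw [pad1_zero v (show ¬(1 ≤ 0 ∧ 0 ≤ 2 - 1) by omega), show (0:ℕ) + 1 = 1 from rfl]
          ring
        have hc1 : ∀ k : Fin m, Q k 1 = pad1 u ((k : ℕ) + 1) * pad1 v 1 := by
          intro k
          rw [huv k 1]
          simp only [Fin.val_one]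
          rw [pad1_zero v (show ¬(1 ≤ 1 + 1 ∧ 1 + 1 ≤ 2 - 1) by omega)]
          ring
        funext l
        rw [liftS_m2]
        have hl2 := l.isLt
        simp only [Pi.zero_apply]
        split
        · next h1 =>
          split
          · next h2 =>
            rw [hc0, hc1]
            show -(pad1 u (l : ℕ) * pad1 v 1) + pad1 u ((l : ℕ) - 1 + 1) * pad1 v 1 = 0
            rw [show (l : ℕ) - 1 + 1 = (l : ℕ) by omega]
            ring
          · next h2 =>
            rw [hc0, show ((⟨(l : ℕ), h1⟩ : Fin m) : ℕ) = (l : ℕ) from rfl,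
                pad1_zero u (show ¬(1 ≤ (l : ℕ) ∧ (l : ℕ) ≤ m - 1) by omega)]
            ring
        · next h1 =>
          split
          · next h2 =>
            rw [hc1, show ((⟨(l : ℕ) - 1, h2.2⟩ : Fin m) : ℕ) = (l : ℕ) - 1 from rfl,
                pad1_zero u (show ¬(1 ≤ (l : ℕ) - 1 + 1 ∧ (l : ℕ) - 1 + 1 ≤ m - 1) by omega)]
            ring
          · next h2 => norm_num
  · -- N(S_{(2,n)}, 2) = N0(2,n)
    ext Q
    constructor
    · rintro ⟨-, hS⟩
      have key : ∀ c : ℕ, c ≤ n →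
          (if h : c < n then Q 0 ⟨c, h⟩ else 0)
            + (if h : 1 ≤ c ∧ c - 1 < n then Q 1 ⟨c - 1, h.2⟩ else 0) = 0 := by
        intro c hc
        have h := congrFun hS ⟨c, by omega⟩
        rw [liftS_2n] at h
        simpa using h
      have e0 : Q 0 ⟨0, by omega⟩ = 0 := by
        have h := key 0 (by omega)
        rw [dif_pos (show (0:ℕ) < n by omega), dif_neg (show ¬(1 ≤ 0 ∧ 0 - 1 < n) by omega)] at h
        simpa using h
      have elast : Q 1 ⟨n - 1, by omega⟩ = 0 := by
        have h := key n (by omega)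
        rw [dif_neg (show ¬(n < n) by omega), dif_pos (show 1 ≤ n ∧ n - 1 < n by omega)] at h
        simpa using h
      have emid : ∀ (c : ℕ) (_ : 1 ≤ c) (_ : c ≤ n - 1),
          Q 0 ⟨c, by omega⟩ + Q 1 ⟨c - 1, by omega⟩ = 0 := by
        intro c h1 h2
        have h := key c (by omega)
        rw [dif_pos (show c < n by omega), dif_pos (show 1 ≤ c ∧ c - 1 < n by omega)] at h
        exact h
      set u : Fin (2 - 1) → ℝ := fun _ => (1 : ℝ) with hudef
      set v : Fin (n - 1) → ℝ := fun j => Q 0 ⟨(j : ℕ) + 1, by omega⟩ with hvdef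
      refine ⟨u, v, ?_⟩
      have hv1 : ∀ (i : ℕ) (_ : 1 ≤ i) (_ : i ≤ n - 1),
          pad1 v i = Q 0 ⟨i, by omega⟩ := by
        intro i h1 h2
        rw [pad1_pos v ⟨h1, h2⟩]
        show Q 0 ⟨i - 1 + 1, by omega⟩ = Q 0 ⟨i, by omega⟩
        exact congrArg (fun t : Fin n => Q 0 t) (Fin.ext (show i - 1 + 1 = i by omega))
      have hu1 : pad1 u (1 : ℕ) = 1 := pad1_pos u (by omega)
      intro k l
      have hk2 := k.isLt
      rcases (show (k : ℕ) = 0 ∨ (k : ℕ) = 1 by omega) with h | h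
      · rw [h]
        rw [pad1_zero u (show ¬(1 ≤ 0 ∧ 0 ≤ 2 - 1) by omega),
            show (0:ℕ) + 1 = 1 from rfl, hu1]
        have hk0 : k = 0 := Fin.ext (by rw [h]; rfl)
        rw [hk0]
        by_cases hl1 : 1 ≤ (l : ℕ)
        · rw [hv1 _ hl1 (by have := l.isLt; omega),
              show (⟨(l : ℕ), by have := l.isLt; omega⟩ : Fin n) = l from Fin.ext rfl]
          ring
        · rw [pad1_zero v (show ¬(1 ≤ (l : ℕ) ∧ (l : ℕ) ≤ n - 1) by omega)]
          have hl0 : (l : ℕ) = 0 := by omega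
          rw [show l = ⟨0, by omega⟩ from Fin.ext hl0, e0]
          ring
      · rw [h]
        rw [hu1, pad1_zero u (show ¬(1 ≤ 1 + 1 ∧ 1 + 1 ≤ 2 - 1) by omega)]
        have hk1 : k = 1 := Fin.ext (by rw [h]; rfl)
        rw [hk1]
        by_cases hl1 : (l : ℕ) + 1 ≤ n - 1
        · rw [hv1 ((l : ℕ) + 1) (by omega) hl1]
          have h2 := emid ((l : ℕ) + 1) (by omega) hl1
          rw [show (⟨(l : ℕ) + 1 - 1, by omega⟩ : Fin n) = l
              from Fin.ext (show (l : ℕ) + 1 - 1 = (l : ℕ) by omega)] at h2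
          linarith
        · rw [pad1_zero v (show ¬(1 ≤ (l : ℕ) + 1 ∧ (l : ℕ) + 1 ≤ n - 1) by omega)]
          have hln : (l : ℕ) = n - 1 := by have := l.isLt; omega
          rw [show l = ⟨n - 1, by omega⟩ from Fin.ext hln, elast]
          ring
    · rintro ⟨u, v, huv⟩
      constructor
      · exact (Matrix.rank_le_card_height Q).trans (by simp)
      · have hr0 : ∀ j : Fin n, Q 0 j = pad1 u 1 * pad1 v (j : ℕ) := by
          intro j
          rw [huv 0 j]
          simp only [Fin.val_zero]
          rw [pad1_zero u (show ¬(1 ≤ 0 ∧ 0 ≤ 2 - 1) by omega), show (0:ℕ) + 1 = 1 from rfl]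
          ring
        have hr1 : ∀ j : Fin n, Q 1 j = -(pad1 u 1 * pad1 v ((j : ℕ) + 1)) := by
          intro j
          rw [huv 1 j]
          simp only [Fin.val_one]
          rw [pad1_zero u (show ¬(1 ≤ 1 + 1 ∧ 1 + 1 ≤ 2 - 1) by omega)]
          ring
        funext l
        rw [liftS_2n]
        have hl2 := l.isLt
        simp only [Pi.zero_apply]
        split
        · next h1 =>
          split
          · next h2 =>
            rw [hr0, hr1]
            show pad1 u 1 * pad1 v (l : ℕ) + -(pad1 u 1 * pad1 v ((l : ℕ) - 1 + 1)) = 0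
            rw [show (l : ℕ) - 1 + 1 = (l : ℕ) by omega]
            ring
          · next h2 =>
            rw [hr0, show ((⟨(l : ℕ), h1⟩ : Fin n) : ℕ) = (l : ℕ) from rfl,
                pad1_zero v (show ¬(1 ≤ (l : ℕ) ∧ (l : ℕ) ≤ n - 1) by omega)]
            ring
        · next h1 =>
          split
          · next h2 =>
            rw [hr1, show ((⟨(l : ℕ) - 1, h2.2⟩ : Fin n) : ℕ) = (l : ℕ) - 1 from rfl,
                pad1_zero v (show ¬(1 ≤ (l : ℕ) - 1 + 1 ∧ (l : ℕ) - 1 + 1 ≤ n - 1) by omega)]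
            ring
          · next h2 => norm_num
end
end

section
/- Let n ≥ 3 be an integer, u ∈ ℝ^{n−2} a nonzero vector, and λ a nonzero real number. Define X ∈ ℝ^{n×n} by: X(1,l) = −u(l−1) for 2 ≤ l ≤ n−1; X(k,1) = u(k−1) and X(k,n) = λ·u(k−1) for 2 ≤ k ≤ n−1; X(n,l) = −λ·u(l−1) for 2 ≤ l ≤ n−1; and all other entries (in particular X(1,1), X(1,n), X(n,1), X(n,n) and the middle block X(k,l) for 2 ≤ k,l ≤ n−1) equal to 0. Then X is skew-symmetric, X belongs to N(S_{(n,n)}, 2) ∩ M(n,n), and X does not belong to N0(n,n) ∪ N2(n,n). -/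
open scoped BigOperators
open MeasureTheory

noncomputable section

lemma liftS_skew {m : ℕ} (Q : Matrix (Fin m) (Fin m) ℝ)
    (h : Matrix.transpose Q = -Q) : liftS m m Q = 0 := by
  funext l
  have hs : ∀ k j : Fin m, Q j k = -Q k j := by
    intro k j
    simpa using congrFun (congrFun h k) j
  have key : liftS m m Q l = -(liftS m m Q l) := by
    calc liftS m m Q l
        = ∑ j : Fin m, ∑ k : Fin m, (if (k:ℕ)+(j:ℕ)=(l:ℕ) then Q k j else 0) :=
          Finset.sum_comm
      _ = ∑ a : Fin m, ∑ b : Fin m, -(if (a:ℕ)+(b:ℕ)=(l:ℕ) then Q a b else 0) := by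
          refine Finset.sum_congr rfl fun a _ => Finset.sum_congr rfl fun b _ => ?_
          rw [hs a b, Nat.add_comm (b:ℕ) (a:ℕ)]
          split <;> simp
      _ = -(liftS m m Q l) := by
          simp [liftS, Finset.sum_neg_distrib]
  have : liftS m m Q l = 0 := by linarith
  simpa using this

lemma rank_two_aux {n : ℕ} (v w : Fin n → ℝ) :
    (Matrix.vecMulVec v w - Matrix.vecMulVec w v).rank ≤ 2 := by
  classical
  set A := Matrix.vecMulVec v w - Matrix.vecMulVec w v with hA
  have hrange : LinearMap.range A.mulVecLin ≤ Submodule.span ℝ {v, w} := by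
    rintro x ⟨y, rfl⟩
    have hx : A.mulVecLin y = (dotProduct w y) • v - (dotProduct v y) • w := by
      funext k
      simp only [Matrix.mulVecLin_apply, Matrix.mulVec, dotProduct, hA,
        Matrix.sub_apply, Matrix.vecMulVec_apply, Pi.sub_apply, Pi.smul_apply, smul_eq_mul]
      rw [Finset.sum_mul, Finset.sum_mul, ← Finset.sum_sub_distrib]
      exact Finset.sum_congr rfl fun j _ => by ring
    rw [hx]
    exact Submodule.sub_mem _
      (Submodule.smul_mem _ _ (Submodule.subset_span (by simp)))
      (Submodule.smul_mem _ _ (Submodule.subset_span (by simp)))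
  have h1 : A.rank ≤ Module.finrank ℝ (Submodule.span ℝ ({v, w} : Set (Fin n → ℝ))) :=
    Submodule.finrank_mono hrange
  refine h1.trans ?_
  refine (finrank_span_le_card _).trans ?_
  rw [Set.toFinset_insert, Set.toFinset_singleton]
  exact (Finset.card_insert_le _ _).trans (by simp)

/-- the explicit bordered matrix `X` built from `u ≠ 0` and `λ ≠ 0` is
skew-symmetric, lies in `N(S_{(n,n)}, 2) ∩ M(n,n)`, and is outside `N0(n,n) ∪ N2(n,n)`. -/
theorem stmt7 (n : ℕ) (hn : 3 ≤ n) (u : Fin (n - 2) → ℝ) (hu : u ≠ 0)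
    (lam : ℝ) (hlam : lam ≠ 0) :
    let X : Matrix (Fin n) (Fin n) ℝ := Matrix.of fun k l =>
      if (k : ℕ) = 0 then
        (if h : 1 ≤ (l : ℕ) ∧ (l : ℕ) ≤ n - 2 then -u ⟨(l : ℕ) - 1, by omega⟩ else 0)
      else if (k : ℕ) = n - 1 then
        (if h : 1 ≤ (l : ℕ) ∧ (l : ℕ) ≤ n - 2 then -(lam * u ⟨(l : ℕ) - 1, by omega⟩) else 0)
      else if (l : ℕ) = 0 then
        (if h : 1 ≤ (k : ℕ) ∧ (k : ℕ) ≤ n - 2 then u ⟨(k : ℕ) - 1, by omega⟩ else 0)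
      else if (l : ℕ) = n - 1 then
        (if h : 1 ≤ (k : ℕ) ∧ (k : ℕ) ≤ n - 2 then lam * u ⟨(k : ℕ) - 1, by omega⟩ else 0)
      else 0
    Matrix.transpose X = -X ∧
    X ∈ rankTwoNull n n ∧
    X ∈ Mexc n n (by omega) (by omega) ∧
    X ∉ N0set n n ∪ N2set n n := by
  intro X
  classical
  obtain ⟨i, hui⟩ : ∃ i, u i ≠ 0 := Function.ne_iff.mp hu
  have hi := i.isLt
  set v : Fin n → ℝ :=
    fun k => if h : 1 ≤ (k:ℕ) ∧ (k:ℕ) ≤ n - 2 then u ⟨(k:ℕ)-1, by omega⟩ else 0 with hv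
  set w : Fin n → ℝ :=
    fun k => if (k:ℕ) = 0 then 1 else if (k:ℕ) = n-1 then lam else 0 with hw
  have hXvw : X = Matrix.vecMulVec v w - Matrix.vecMulVec w v := by
    ext k l
    simp only [X, Matrix.of_apply, Matrix.sub_apply, Matrix.vecMulVec_apply, hv, hw]
    split_ifs <;> first | ring1 | (exfalso; omega)
  have hskew : Matrix.transpose X = -X := by
    rw [hXvw]
    ext k l
    simp only [Matrix.transpose_apply, Matrix.neg_apply, Matrix.sub_apply,
      Matrix.vecMulVec_apply]
    ring
  have hmem : X ∈ rankTwoNull n n := by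
    constructor
    · rw [hXvw]; exact rank_two_aux v w
    · exact liftS_skew X hskew
  set k0 : Fin n := ⟨0, by omega⟩ with hk0def
  set kp : Fin n := ⟨(i:ℕ)+1, by omega⟩ with hkpdef
  set kn : Fin n := ⟨n-1, by omega⟩ with hkndef
  have hk0 : (k0:ℕ) = 0 := rfl
  have hkp : (kp:ℕ) = (i:ℕ)+1 := rfl
  have hkn : (kn:ℕ) = n-1 := rfl
  have hv0 : v k0 = 0 := by
    simp only [hv]; rw [dif_neg (by omega)]
  have hvp : v kp = u i := by
    simp only [hv]; rw [dif_pos (by omega)]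
    exact congrArg u (Fin.ext (by simp [hkp]))
  have hvn : v kn = 0 := by
    simp only [hv]; rw [dif_neg (by omega)]
  have hw0 : w k0 = 1 := by
    show (if (k0:ℕ) = 0 then (1:ℝ) else if (k0:ℕ) = n-1 then lam else 0) = 1
    rw [if_pos hk0]
  have hwp : w kp = 0 := by
    show (if (kp:ℕ) = 0 then (1:ℝ) else if (kp:ℕ) = n-1 then lam else 0) = 0
    rw [if_neg (by omega), if_neg (by omega)]
  have hwn : w kn = lam := by
    show (if (kn:ℕ) = 0 then (1:ℝ) else if (kn:ℕ) = n-1 then lam else 0) = lam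
    rw [if_neg (by omega), if_pos hkn]
  have E1 : X k0 kp = -u i := by
    rw [hXvw]; simp only [Matrix.sub_apply, Matrix.vecMulVec_apply, hv0, hvp, hw0, hwp]; ring
  have E2 : X kp kn = lam * u i := by
    rw [hXvw]; simp only [Matrix.sub_apply, Matrix.vecMulVec_apply, hvp, hvn, hwp, hwn]; ring
  have E3 : X k0 kn = 0 := by
    rw [hXvw]; simp only [Matrix.sub_apply, Matrix.vecMulVec_apply, hv0, hvn, hw0, hwn]; ring
  have p0 : ∀ (d : ℕ) (x : Fin d → ℝ), pad1 x 0 = 0 := by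
    intro d x; rw [pad1, dif_neg]; omega
  have pn : ∀ (x : Fin (n-1) → ℝ), pad1 x n = 0 := by
    intro x; rw [pad1, dif_neg]; omega
  have hne : n - 1 + 1 = n := by omega
  refine ⟨hskew, hmem, ⟨hmem, ?_, ?_⟩, ?_⟩
  · -- X (n-1) 0 = 0
    have : X kn k0 = 0 := by
      rw [hXvw]; simp only [Matrix.sub_apply, Matrix.vecMulVec_apply, hv0, hvn, hw0, hwn]; ring
    exact this
  · exact E3
  · rintro (⟨u', v', hQ⟩ | ⟨u1, u2, v1, v2, -, -, hQ⟩)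
    · have e1 := hQ k0 kp
      have e2 := hQ kp kn
      have e3 := hQ k0 kn
      rw [E1, hk0, hkp, p0, zero_mul, sub_zero] at e1
      rw [E2, hkp, hkn, hne, pn, mul_zero, sub_zero] at e2
      rw [E3, hk0, hkn, hne, p0, pn, zero_mul, sub_zero] at e3
      have h1 : pad1 u' (0+1) ≠ 0 :=
        left_ne_zero_of_mul (by rw [← e1]; exact neg_ne_zero.mpr hui)
      have h2 : pad1 v' (n-1) ≠ 0 :=
        right_ne_zero_of_mul (by rw [← e2]; exact mul_ne_zero hlam hui)
      exact (mul_ne_zero h1 h2) e3.symm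
    · have e1 := hQ k0 kp
      have e2 := hQ kp kn
      have e3 := hQ k0 kn
      rw [E1, hk0, hkp, p0, zero_mul, add_zero] at e1
      rw [E2, hkp, hkn, hne, pn, mul_zero, add_zero] at e2
      rw [E3, hk0, hkn, hne, p0, pn, zero_mul, add_zero] at e3
      have h1 : pad1 u1 (0+1) ≠ 0 :=
        left_ne_zero_of_mul (by rw [← e1]; exact neg_ne_zero.mpr hui)
      have h2 : pad1 v1 (n-1) ≠ 0 :=
        right_ne_zero_of_mul (by rw [← e2]; exact mul_ne_zero hlam hui)
      exact (mul_ne_zero h1 h2) e3.symm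
end
end
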